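/- For every n ≥ 1, every ω ≥ 1, every hash sequence h : ℕ → ℕ and every seeded hash H : ℕ → ℕ → ℕ, the BinomialHash lookup satisfies 0 ≤ lookup(n, h, H) < n; i.e. it always returns a valid bucket. -/

import Mathlib

/-- Relocation within a level: `reloc H b x = b` if `b < 2`, otherwise
`2^d + (H x (2^d − 1)) % 2^d` with `d = Nat.log 2 b`. -/
def reloc (H : ℕ → ℕ → ℕ) (b x : ℕ) : ℕ :=
  if b < 2 then b
  else 2 ^ Nat.log 2 b + (H x (2 ^ Nat.log 2 b - 1)) % 2 ^ Nat.log 2 b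

/-- The main loop of BinomialHash: starting at iteration `i` with `fuel`
remaining iterations, compute `c = reloc(h i % E, h i)`; if `c < M` fall back to
the minor tree, if `c < n` return `c`, otherwise continue; after the last
iteration fall back to the minor tree. -/
def binLoop (H : ℕ → ℕ → ℕ) (n M E : ℕ) (h : ℕ → ℕ) : ℕ → ℕ → ℕ
  | _, 0 => reloc H (h 0 % M) (h 0)
  | i, fuel + 1 =>
      let c := reloc H (h i % E) (h i)
      if c < M then reloc H (h 0 % M) (h 0)
      else if c < n then c
      else binLoop H n M E h (i + 1) fuel

/-- The BinomialHash lookup with at most `ω` loop iterations: returns `0` when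
`n = 1`, and otherwise runs the loop with `E = 2^l`, `M = 2^(l-1)`,
`l = Nat.clog 2 n`. -/
def binomialLookup (ω n : ℕ) (h : ℕ → ℕ) (H : ℕ → ℕ → ℕ) : ℕ :=
  if n = 1 then 0
  else binLoop H n (2 ^ (Nat.clog 2 n - 1)) (2 ^ Nat.clog 2 n) h 0 ω

/-- BinomialHash always returns a valid bucket: for every `n ≥ 1` and `ω ≥ 1`,
`0 ≤ lookup(n, h, H) < n`. -/
lemma reloc_lt_pow (H : ℕ → ℕ → ℕ) (k b x : ℕ) (hb : b < 2 ^ k) :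
    reloc H b x < 2 ^ k := by
  unfold reloc
  split
  · exact hb
  · rename_i h2
    push_neg at h2
    have hd : Nat.log 2 b + 1 ≤ k := by
      have h1 : 2 ^ Nat.log 2 b ≤ b := Nat.pow_log_le_self 2 (by omega)
      have : 2 ^ Nat.log 2 b < 2 ^ k := lt_of_le_of_lt h1 hb
      exact Nat.pow_lt_pow_iff_right (by norm_num) |>.mp this
    calc 2 ^ Nat.log 2 b + (H x (2 ^ Nat.log 2 b - 1)) % 2 ^ Nat.log 2 b
        < 2 ^ Nat.log 2 b + 2 ^ Nat.log 2 b :=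
          Nat.add_lt_add_left (Nat.mod_lt _ (Nat.pow_pos (by norm_num))) _
      _ = 2 ^ (Nat.log 2 b + 1) := by ring
      _ ≤ 2 ^ k := Nat.pow_le_pow_right (by norm_num) hd

lemma binLoop_lt (H : ℕ → ℕ → ℕ) (n k E : ℕ) (h : ℕ → ℕ)
    (hk : 2 ^ k < n) : ∀ fuel i, binLoop H n (2 ^ k) E h i fuel < n := by
  intro fuel
  induction fuel with
  | zero =>
      intro i
      simp only [binLoop]
      exact lt_trans (reloc_lt_pow H k _ _ (Nat.mod_lt _ (Nat.pow_pos (by norm_num)))) hk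
  | succ fuel ih =>
      intro i
      simp only [binLoop]
      split
      · exact lt_trans (reloc_lt_pow H k _ _ (Nat.mod_lt _ (Nat.pow_pos (by norm_num)))) hk
      · split
        · assumption
        · exact ih (i + 1)

theorem binomialLookup_lt (ω n : ℕ) (hω : 1 ≤ ω) (hn : 1 ≤ n)
    (h : ℕ → ℕ) (H : ℕ → ℕ → ℕ) :
    0 ≤ binomialLookup ω n h H ∧ binomialLookup ω n h H < n := by
  refine ⟨Nat.zero_le _, ?_⟩
  unfold binomialLookup
  split
  · omega
  · rename_i hne
    have hn2 : 2 ≤ n := by omega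
    exact binLoop_lt H n _ _ h (Nat.pow_pred_clog_lt_self (by norm_num) hn2) ω 0
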